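/- If M is a cofinitary matroid, J is an independent set of M, and B is a base of M, then there is an injection f : J → B such that (B \ {f(x)}) ∪ {x} is a base of M for each x ∈ J. -/

import Mathlib

open Set
namespace Stmt6Aux
variable {α : Type*}

/-- Finite character of closure in a finitary matroid. -/
lemma closure_finchar (N : Matroid α) [N.Finitary] {X : Set α} {e : α}
    (hX : X ⊆ N.E) (he : e ∈ N.closure X) :
    ∃ F, F ⊆ X ∧ F.Finite ∧ e ∈ N.closure F := by
  obtain ⟨I, hI⟩ := N.exists_isBasis X hX
  have hcl : N.closure I = N.closure X := hI.closure_eq_closure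
  by_cases heI : e ∈ I
  · exact ⟨{e}, singleton_subset_iff.2 (hI.subset heI), finite_singleton e,
      N.mem_closure_self e (hX (hI.subset heI))⟩
  have hdep : N.Dep (insert e I) := by
    rw [hI.indep.insert_dep_iff]
    exact ⟨hcl ▸ he, heI⟩
  have hfin : ∃ F, F ⊆ insert e I ∧ F.Finite ∧ ¬ N.Indep F := by
    by_contra h
    push_neg at h
    exact hdep.not_indep
      (Matroid.indep_of_forall_finite_subset_indep _ (fun F hF hFfin => h F hF hFfin))
  obtain ⟨F, hFsub, hFfin, hFdep⟩ := hfin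
  have heF : e ∈ F := by
    by_contra heF
    refine hFdep (hI.indep.subset ?_)
    intro u hu
    rcases hFsub hu with rfl | h
    · exact absurd hu heF
    · exact h
  have hF0 : F \ {e} ⊆ I := by
    intro u hu
    rcases hFsub hu.1 with rfl | h
    · exact absurd rfl hu.2
    · exact h
  have hF0i : N.Indep (F \ {e}) := hI.indep.subset hF0
  have hFsub' : F ⊆ insert e (F \ {e}) := by
    intro u hu
    by_cases h : u = e
    · exact h ▸ mem_insert _ _
    · exact mem_insert_of_mem _ ⟨hu, h⟩
  have hins : N.Dep (insert e (F \ {e})) := by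
    refine (N.dep_iff).2 ⟨?_, ?_⟩
    · intro hcon
      exact hFdep (hcon.subset hFsub')
    · exact insert_subset (N.closure_subset_ground X he)
        ((hF0.trans hI.indep.subset_ground))
  have hmem := hF0i.insert_dep_iff.1 hins
  exact ⟨F \ {e}, hF0.trans hI.subset, hFfin.diff, hmem.1⟩

/-- Exchanging into a base: if `x ∈ D` and `b ∉ cl (D \ {x})`, then `insert b (D \ {x})`
is a base. -/
lemma insert_base (N : Matroid α) {D : Set α} {x b : α} (hD : N.IsBase D) (hx : x ∈ D)
    (hb : b ∈ N.E) (hbcl : b ∉ N.closure (D \ {x})) : N.IsBase (insert b (D \ {x})) := by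
  have hDE : D ⊆ N.E := hD.subset_ground
  have hDdx : N.Indep (D \ {x}) := hD.indep.subset diff_subset
  have hbD : b ∉ D \ {x} := fun h => hbcl (N.subset_closure _ (diff_subset.trans hDE) h)
  have hins : N.Indep (insert b (D \ {x})) :=
    (hDdx.insert_indep_iff_of_notMem hbD).2 ⟨hb, hbcl⟩
  have hxmem : x ∈ N.closure (insert b (D \ {x})) := by
    refine Matroid.mem_closure_insert hbcl ?_
    rw [insert_diff_singleton, insert_eq_self.2 hx, hD.closure_eq]
    exact hb
  refine hins.isBase_of_ground_subset_closure ?_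
  have hDsub : D ⊆ N.closure (insert b (D \ {x})) := by
    intro d hd
    rcases eq_or_ne d x with rfl | hne
    · exact hxmem
    · exact N.subset_closure _ (insert_subset hb (diff_subset.trans hDE))
        (mem_insert_of_mem _ ⟨hd, hne⟩)
  rw [← hD.closure_eq]
  exact Matroid.closure_subset_closure_of_subset_closure hDsub



section PartA
variable (N : Matroid α) (D T A : Set α) (e : α → ℕ) (x₀ : α)

def IsStep (n : ℕ) : Prop := ∃ t, t ∈ T ∧ e t = n

open scoped Classical in
noncomputable def stepF (n : ℕ) (hist : ℕ → α) : α :=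
  if hn : IsStep T e n then
    (if hs : ∃ a, a ∈ A ∧ a ∉ hist '' {k | k < n ∧ IsStep T e k} ∧
        a ∉ N.closure (D \ {hn.choose}) ∧
        a ∈ N.closure (insert hn.choose
          ((((D \ T) ∪ (A \ hist '' {k | k < n ∧ IsStep T e k})) ∪
            {t | t ∈ T ∧ e t < n}) \ {a}))
      then hs.choose else x₀)
  else x₀

noncomputable def runF : ℕ → ℕ → α
  | 0 => fun _ => x₀
  | n+1 => Function.update (runF n) n (stepF N D T A e x₀ n (runF n))

noncomputable def seqF (n : ℕ) : α := stepF N D T A e x₀ n (runF N D T A e x₀ n)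

def usedF (n : ℕ) : Set α := (seqF N D T A e x₀) '' {k | k < n ∧ IsStep T e k}

def availF (n : ℕ) : Set α :=
  ((D \ T) ∪ (A \ usedF N D T A e x₀ n)) ∪ {t | t ∈ T ∧ e t < n}

lemma runF_lt : ∀ n k, k < n → runF N D T A e x₀ n k = seqF N D T A e x₀ k := by
  intro n
  induction n with
  | zero => intro k hk; exact absurd hk (Nat.not_lt_zero k)
  | succ n ih =>
    intro k hk
    rcases eq_or_ne k n with rfl | hne
    · simp [runF, seqF]
    · rw [runF, Function.update_of_ne hne]
      exact ih k (lt_of_le_of_ne (Nat.lt_succ_iff.1 hk) hne)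

lemma hist_image_eq (n : ℕ) :
    (runF N D T A e x₀ n) '' {k | k < n ∧ IsStep T e k} = usedF N D T A e x₀ n := by
  apply Set.image_congr
  intro k hk
  exact runF_lt N D T A e x₀ n k hk.1

open scoped Classical in
lemma seqF_eq (n : ℕ) :
    seqF N D T A e x₀ n =
    if hn : IsStep T e n then
      (if hs : ∃ a, a ∈ A ∧ a ∉ usedF N D T A e x₀ n ∧
          a ∉ N.closure (D \ {hn.choose}) ∧
          a ∈ N.closure (insert hn.choose ((availF N D T A e x₀ n) \ {a}))
        then hs.choose else x₀)
    else x₀ := by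
  rw [seqF, stepF, hist_image_eq]
  rfl

variable {N D T A e}

lemma availF_subset_ground (hD : N.IsBase D) (hT : T ⊆ D) (hAE : A ⊆ N.E) (n : ℕ) :
    availF N D T A e x₀ n ⊆ N.E := by
  have hDE := hD.subset_ground
  refine union_subset (union_subset (diff_subset.trans hDE) (diff_subset.trans hAE)) ?_
  intro u hu
  exact hDE (hT hu.1)

/-- Key step-existence lemma. -/
lemma exists_spec [N.Finitary] (hD : N.IsBase D) (hT : T ⊆ D) (hAE : A ⊆ N.E)
    {n : ℕ} (hInv : N.E ⊆ N.closure (availF N D T A e x₀ n)) (hn : IsStep T e n) :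
    ∃ a, a ∈ A ∧ a ∉ usedF N D T A e x₀ n ∧
      a ∉ N.closure (D \ {hn.choose}) ∧
      a ∈ N.closure (insert hn.choose ((availF N D T A e x₀ n) \ {a})) := by
  classical
  obtain ⟨htT, hte⟩ := hn.choose_spec
  set t := hn.choose with hts
  have htD : t ∈ D := hT htT
  have htE : t ∈ N.E := hD.subset_ground htD
  set H := N.closure (D \ {t}) with hH
  have htH : t ∉ H := hD.indep.notMem_closure_diff_of_mem htD
  have htcl : t ∈ N.closure (availF N D T A e x₀ n) := hInv htE
  obtain ⟨F₁, hF₁sub, hF₁fin, hF₁t⟩ :=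
    closure_finchar N (availF_subset_ground x₀ hD hT hAE n) htcl
  -- minimize (F \ H).ncard among finite witnesses
  set P : ℕ → Prop := fun m => ∃ F, (F ⊆ availF N D T A e x₀ n ∧ F.Finite ∧
    t ∈ N.closure F) ∧ (F \ H).ncard = m with hP
  have hPne : ∃ m, P m := ⟨_, F₁, ⟨hF₁sub, hF₁fin, hF₁t⟩, rfl⟩
  obtain ⟨F, ⟨hFsub, hFfin, hFt⟩, hFcard⟩ := Nat.find_spec hPne
  have hFHne : (F \ H).Nonempty := by
    rw [nonempty_iff_ne_empty]
    intro hcon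
    have hFH : F ⊆ H := by
      intro u hu
      by_contra hc
      exact (eq_empty_iff_forall_notMem.1 hcon u) ⟨hu, hc⟩
    have : t ∈ H := by
      have h1 : N.closure F ⊆ N.closure H := N.closure_subset_closure hFH
      rw [hH, Matroid.closure_closure] at h1
      exact h1 hFt
    exact htH this
  obtain ⟨a, haF, haH⟩ := hFHne
  have haavail : a ∈ availF N D T A e x₀ n := hFsub haF
  have haA : a ∈ A ∧ a ∉ usedF N D T A e x₀ n := by
    rcases haavail with (h | h) | h
    · exact absurd (N.subset_closure (D \ {t}) (diff_subset.trans hD.subset_ground)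
        ⟨h.1, fun hc => (hc ▸ h.2) htT⟩) haH
    · exact ⟨h.1, h.2⟩
    · have hat : a ≠ t := by
        intro hc
        rw [hc] at h
        exact lt_irrefl n (hte ▸ h.2)
      have hmem : a ∈ D \ {t} := ⟨hT h.1, by simpa using hat⟩
      exact absurd (N.subset_closure (D \ {t}) (diff_subset.trans hD.subset_ground) hmem) haH
  have htFa : t ∉ N.closure (F \ {a}) := by
    intro hcon
    have hlt : ((F \ {a}) \ H).ncard < (F \ H).ncard := by
      have : (F \ {a}) \ H = (F \ H) \ {a} := by
        rw [diff_diff_comm]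
      rw [this]
      exact Set.ncard_diff_singleton_lt_of_mem ⟨haF, haH⟩ (hFfin.diff)
    rw [hFcard] at hlt
    exact Nat.find_min hPne hlt ⟨F \ {a}, ⟨diff_subset.trans hFsub, hFfin.diff, hcon⟩, rfl⟩
  have key : a ∈ N.closure (insert t (F \ {a})) := by
    refine Matroid.mem_closure_insert htFa ?_
    rwa [insert_diff_singleton, insert_eq_self.2 haF]
  refine ⟨a, haA.1, haA.2, haH, ?_⟩
  exact N.closure_subset_closure (insert_subset_insert (diff_subset_diff_left hFsub)) key

lemma usedF_succ_step {n : ℕ} (hn : IsStep T e n) :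
    usedF N D T A e x₀ (n+1) = insert (seqF N D T A e x₀ n) (usedF N D T A e x₀ n) := by
  unfold usedF
  ext u
  simp only [mem_image, mem_setOf_eq, mem_insert_iff]
  constructor
  · rintro ⟨k, ⟨hk, hks⟩, rfl⟩
    rcases eq_or_ne k n with rfl | hne
    · exact Or.inl rfl
    · exact Or.inr ⟨k, ⟨lt_of_le_of_ne (Nat.lt_succ_iff.1 hk) hne, hks⟩, rfl⟩
  · rintro (rfl | ⟨k, ⟨hk, hks⟩, rfl⟩)
    · exact ⟨n, ⟨Nat.lt_succ_self n, hn⟩, rfl⟩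
    · exact ⟨k, ⟨hk.trans (Nat.lt_succ_self n), hks⟩, rfl⟩

lemma usedF_succ_nostep {n : ℕ} (hn : ¬ IsStep T e n) :
    usedF N D T A e x₀ (n+1) = usedF N D T A e x₀ n := by
  unfold usedF
  ext u
  simp only [mem_image, mem_setOf_eq]
  constructor
  · rintro ⟨k, ⟨hk, hks⟩, rfl⟩
    rcases eq_or_ne k n with rfl | hne
    · exact absurd hks hn
    · exact ⟨k, ⟨lt_of_le_of_ne (Nat.lt_succ_iff.1 hk) hne, hks⟩, rfl⟩
  · rintro ⟨k, ⟨hk, hks⟩, rfl⟩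
    exact ⟨k, ⟨hk.trans (Nat.lt_succ_self n), hks⟩, rfl⟩

lemma processed_succ_nostep {n : ℕ} (hn : ¬ IsStep T e n) :
    {u | u ∈ T ∧ e u < n+1} = {u | u ∈ T ∧ e u < n} := by
  ext u
  simp only [mem_setOf_eq]
  constructor
  · rintro ⟨h1, h2⟩
    rcases eq_or_ne (e u) n with hq | hq
    · exact absurd ⟨u, h1, hq⟩ hn
    · exact ⟨h1, lt_of_le_of_ne (Nat.lt_succ_iff.1 h2) hq⟩
  · rintro ⟨h1, h2⟩
    exact ⟨h1, h2.trans (Nat.lt_succ_self n)⟩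

lemma availF_succ_nostep {n : ℕ} (hn : ¬ IsStep T e n) :
    availF N D T A e x₀ (n+1) = availF N D T A e x₀ n := by
  unfold availF
  rw [usedF_succ_nostep x₀ hn, processed_succ_nostep (T := T) hn]

lemma processed_succ_step (hinj : InjOn e T) {n : ℕ} (hn : IsStep T e n) :
    {u | u ∈ T ∧ e u < n+1} = insert hn.choose {u | u ∈ T ∧ e u < n} := by
  obtain ⟨htT, hte⟩ := hn.choose_spec
  ext u
  simp only [mem_setOf_eq, mem_insert_iff]
  constructor
  · rintro ⟨h1, h2⟩
    rcases eq_or_ne (e u) n with hq | hq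
    · exact Or.inl (hinj h1 htT (by rw [hq, hte]))
    · exact Or.inr ⟨h1, lt_of_le_of_ne (Nat.lt_succ_iff.1 h2) hq⟩
  · rintro (rfl | ⟨h1, h2⟩)
    · exact ⟨htT, by rw [hte]; exact Nat.lt_succ_self n⟩
    · exact ⟨h1, h2.trans (Nat.lt_succ_self n)⟩

lemma availF_succ_step (hT : T ⊆ D) (hAD : Disjoint A D) (hinj : InjOn e T)
    {n : ℕ} (hn : IsStep T e n) (ha : seqF N D T A e x₀ n ∈ A) :
    availF  N D T A e x₀ (n+1) =
      insert hn.choose ((availF N D T A e x₀ n) \ {seqF N D T A e x₀ n}) := by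
  obtain ⟨htT, hte⟩ := hn.choose_spec
  set t := hn.choose with hts
  set a := seqF N D T A e x₀ n with has
  have haD : a ∉ D := fun h => (Set.disjoint_left.1 hAD ha) h
  have haDT : a ∉ D \ T := fun h => haD h.1
  have haPn : a ∉ {u | u ∈ T ∧ e u < n} := fun h => haD (hT h.1)
  unfold availF
  rw [usedF_succ_step x₀ hn, processed_succ_step (T := T) hinj hn, union_insert]
  congr 1
  rw [union_diff_distrib, union_diff_distrib, diff_singleton_eq_self haDT,
    diff_singleton_eq_self haPn, diff_diff, union_singleton]

open scoped Classical in
lemma seq_spec [N.Finitary] (hD : N.IsBase D) (hT : T ⊆ D) (hAE : A ⊆ N.E)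
    {n : ℕ} (hInv : N.E ⊆ N.closure (availF N D T A e x₀ n)) (hn : IsStep T e n) :
    seqF N D T A e x₀ n ∈ A ∧ seqF N D T A e x₀ n ∉ usedF N D T A e x₀ n ∧
      seqF N D T A e x₀ n ∉ N.closure (D \ {hn.choose}) ∧
      seqF N D T A e x₀ n ∈ N.closure
        (insert hn.choose ((availF N D T A e x₀ n) \ {seqF N D T A e x₀ n})) := by
  have hs := exists_spec x₀ hD hT hAE hInv hn
  have heq : seqF N D T A e x₀ n = hs.choose := by
    rw [seqF_eq, dif_pos hn, dif_pos hs]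
  rw [heq]
  exact hs.choose_spec

lemma main_inv [N.Finitary] (hD : N.IsBase D) (hT : T ⊆ D) (hAE : A ⊆ N.E)
    (hAD : Disjoint A D) (hinj : InjOn e T)
    (hsp : N.E ⊆ N.closure ((D \ T) ∪ A)) :
    ∀ n, N.E ⊆ N.closure (availF N D T A e x₀ n) := by
  intro n
  induction n with
  | zero =>
    have h0 : availF N D T A e x₀ 0 = (D \ T) ∪ A := by
      unfold availF usedF
      have h1 : {k | k < 0 ∧ IsStep T e k} = (∅ : Set ℕ) := by
        ext k; simp
      have h2 : {u | u ∈ T ∧ e u < 0} = (∅ : Set α) := by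
        ext u; simp
      rw [h1, h2, image_empty, diff_empty, union_empty]
    rw [h0]; exact hsp
  | succ n ih =>
    by_cases hn : IsStep T e n
    · obtain ⟨hsA, _, _, hscl⟩ := seq_spec x₀ hD hT hAE ih hn
      rw [availF_succ_step x₀ hT hAD hinj hn hsA]
      set t := hn.choose with hts
      set a := seqF N D T A e x₀ n with has
      have htE : t ∈ N.E := hD.subset_ground (hT hn.choose_spec.1)
      have hsubE : insert t ((availF N D T A e x₀ n) \ {a}) ⊆ N.E :=
        insert_subset htE (diff_subset.trans (availF_subset_ground x₀ hD hT hAE n))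
      have h1 : availF N D T A e x₀ n ⊆ N.closure (insert t ((availF N D T A e x₀ n) \ {a})) := by
        intro u hu
        rcases eq_or_ne u a with rfl | hne
        · exact hscl
        · exact N.subset_closure _ hsubE (mem_insert_of_mem _ ⟨hu, hne⟩)
      intro u hu
      exact (Matroid.closure_subset_closure_of_subset_closure h1) (ih hu)
    · rw [availF_succ_nostep x₀ hn]
      exact ih

lemma partA (N : Matroid α) [N.Finitary] {D T A : Set α} (hD : N.IsBase D) (hT : T ⊆ D)
    (hTc : T.Countable) (hAE : A ⊆ N.E) (hAD : Disjoint A D)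
    (hsp : N.E ⊆ N.closure ((D \ T) ∪ A)) :
    ∃ ψ : α → α, InjOn ψ T ∧ ∀ t ∈ T, ψ t ∈ A ∧ ψ t ∉ N.closure (D \ {t}) := by
  classical
  rcases T.eq_empty_or_nonempty with rfl | ⟨w, hw⟩
  · exact ⟨id, injOn_empty _, fun t ht => absurd ht (notMem_empty t)⟩
  obtain ⟨e, hinj⟩ := Set.countable_iff_exists_injOn.1 hTc
  set x₀ := w with hx₀
  have hInv := main_inv x₀ hD hT hAE hAD hinj hsp
  have hstep : ∀ t ∈ T, IsStep T e (e t) := fun t ht => ⟨t, ht, rfl⟩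
  have hchoose : ∀ t (ht : t ∈ T), (hstep t ht).choose = t := by
    intro t ht
    exact hinj (hstep t ht).choose_spec.1 ht (hstep t ht).choose_spec.2
  refine ⟨fun t => seqF N D T A e x₀ (e t), ?_, ?_⟩
  · intro s hs t ht heq0
    have heq : seqF N D T A e x₀ (e s) = seqF N D T A e x₀ (e t) := heq0
    by_contra hst
    have hne : e s ≠ e t := fun h => hst (hinj hs ht h)
    rcases lt_or_gt_of_ne hne with hlt | hlt
    · have hmem : seqF N D T A e x₀ (e s) ∈ usedF N D T A e x₀ (e t) :=
        ⟨e s, ⟨hlt, hstep s hs⟩, rfl⟩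
      rw [heq] at hmem
      exact (seq_spec x₀ hD hT hAE (hInv (e t)) (hstep t ht)).2.1 hmem
    · have hmem : seqF N D T A e x₀ (e t) ∈ usedF N D T A e x₀ (e s) :=
        ⟨e t, ⟨hlt, hstep t ht⟩, rfl⟩
      rw [← heq] at hmem
      exact (seq_spec x₀ hD hT hAE (hInv (e s)) (hstep s hs)).2.1 hmem
  · intro t ht
    have hsp2 := seq_spec x₀ hD hT hAE (hInv (e t)) (hstep t ht)
    refine ⟨hsp2.1, ?_⟩
    have := hsp2.2.2.1
    rwa [hchoose t ht] at this

end PartA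
section PartB

lemma partB (N : Matroid α) [N.Finitary] {D S A : Set α} (hD : N.IsBase D) (hS : S ⊆ D)
    (hAE : A ⊆ N.E) (hAD : Disjoint A D)
    (hsp : N.E ⊆ N.closure ((D \ S) ∪ A)) :
    ∃ ψ : α → α, InjOn ψ S ∧ ∀ x ∈ S, ψ x ∈ A ∧ ψ x ∉ N.closure (D \ {x}) := by
  classical
  have hDA_E : (D \ S) ∪ A ⊆ N.E := union_subset (diff_subset.trans hD.subset_ground) hAE
  have hGex : ∀ x, x ∈ S → ∃ F, F ⊆ (D \ S) ∪ A ∧ F.Finite ∧ x ∈ N.closure F := by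
    intro x hx
    exact closure_finchar N hDA_E (hsp (hD.subset_ground (hS hx)))
  choose! G hG1 hG2 hG3 using hGex
  have hKex : ∀ a, a ∈ A → ∃ F, F ⊆ D ∧ F.Finite ∧ a ∈ N.closure F := by
    intro a ha
    refine closure_finchar N hD.subset_ground ?_
    rw [hD.closure_eq]
    exact hAE ha
  choose! K hK1 hK2 hK3 using hKex
  set Φ : Set α → Set α :=
    fun X => X ∪ ((⋃ s ∈ X ∩ S, G s ∩ A) ∪ (⋃ a ∈ X ∩ A, K a ∩ S)) with hPhi
  set R : α → Set α := fun x => ⋃ n, Φ^[n] {x} with hRdef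
  have hRself : ∀ x, x ∈ R x := fun x => mem_iUnion.2 ⟨0, by simp⟩
  have hRG : ∀ y x, x ∈ R y → x ∈ S → G x ∩ A ⊆ R y := by
    intro y x hx hxS u hu
    obtain ⟨n, hn⟩ := mem_iUnion.1 hx
    refine mem_iUnion.2 ⟨n+1, ?_⟩
    rw [Function.iterate_succ_apply']
    exact Or.inr (Or.inl (mem_biUnion (show x ∈ (Φ^[n] {y}) ∩ S from ⟨hn, hxS⟩) hu))
  have hRK : ∀ y a, a ∈ R y → a ∈ A → K a ∩ S ⊆ R y := by
    intro y a ha haA u hu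
    obtain ⟨n, hn⟩ := mem_iUnion.1 ha
    refine mem_iUnion.2 ⟨n+1, ?_⟩
    rw [Function.iterate_succ_apply']
    exact Or.inr (Or.inr (mem_biUnion (show a ∈ (Φ^[n] {y}) ∩ A from ⟨hn, haA⟩) hu))
  have hRcount : ∀ x, (R x).Countable := by
    intro x
    refine countable_iUnion (fun n => ?_)
    induction n with
    | zero => simp only [Function.iterate_zero, id]; exact countable_singleton x
    | succ n ih =>
      rw [Function.iterate_succ_apply']
      refine ih.union (Set.Countable.union ?_ ?_)
      · refine Set.Countable.biUnion (ih.mono inter_subset_left) (fun s hs => ?_)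
        exact ((hG2 s hs.2).inter_of_left A).countable
      · refine Set.Countable.biUnion (ih.mono inter_subset_left) (fun a ha => ?_)
        exact ((hK2 a ha.2).inter_of_left S).countable
  have hwf : WellFounded (WellOrderingRel : α → α → Prop) := IsWellFounded.wf
  have hYne : ∀ x, x ∈ S → ({y | y ∈ S ∧ x ∈ R y}).Nonempty := fun x hx => ⟨x, hx, hRself x⟩
  have hmex : ∃ m : α → α, ∀ x, x ∈ S →
      ((m x ∈ S ∧ x ∈ R (m x)) ∧ ∀ z, z ∈ S → x ∈ R z → ¬ WellOrderingRel z (m x)) := by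
    refine ⟨fun x => if hx : x ∈ S then hwf.min {y | y ∈ S ∧ x ∈ R y} (hYne x hx) else x, ?_⟩
    intro x hx
    simp only [dif_pos hx]
    have h1 := hwf.min_mem {y | y ∈ S ∧ x ∈ R y} (hYne x hx)
    exact ⟨⟨h1.1, h1.2⟩, fun z hz hxR =>
      hwf.not_lt_min {y | y ∈ S ∧ x ∈ R y} ⟨hz, hxR⟩⟩
  obtain ⟨m, hmspec⟩ := hmex
  set Tb : α → Set α := fun y => {x | x ∈ S ∧ m x = y} with hTbdef
  set Ab : α → Set α :=
    fun y => (A ∩ R y) \ (⋃ z ∈ {z | z ∈ S ∧ WellOrderingRel z y}, R z) with hAbdef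
  have hTbS : ∀ y, Tb y ⊆ S := fun y x hx => hx.1
  have hAbA : ∀ y, Ab y ⊆ A := fun y a ha => ha.1.1
  -- block spanning
  have hblock : ∀ y, y ∈ S → N.E ⊆ N.closure ((D \ Tb y) ∪ Ab y) := by
    intro y hy
    have hWE : (D \ Tb y) ∪ Ab y ⊆ N.E :=
      union_subset (diff_subset.trans hD.subset_ground) ((hAbA y).trans hAE)
    have hTbW : ∀ x, x ∈ Tb y → x ∈ N.closure ((D \ Tb y) ∪ Ab y) := by
      intro x hx
      obtain ⟨hxS, hmx⟩ := hx
      have hxRy : x ∈ R y := by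
        rw [← hmx]
        exact ((hmspec x hxS).1).2
      have hGsub : G x ⊆ N.closure ((D \ Tb y) ∪ Ab y) := by
        intro g hg
        rcases hG1 x hxS hg with hgD | hgA
        · exact N.subset_closure _ hWE (Or.inl ⟨hgD.1, fun hc => hgD.2 (hTbS y hc)⟩)
        · have hgR : g ∈ R y := hRG y x hxRy hxS ⟨hg, hgA⟩
          by_cases hgAb : g ∈ Ab y
          · exact N.subset_closure _ hWE (Or.inr hgAb)
          · have hgz : g ∈ ⋃ z ∈ {z | z ∈ S ∧ WellOrderingRel z y}, R z := by
              by_contra hc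
              exact hgAb ⟨⟨hgA, hgR⟩, hc⟩
            obtain ⟨z, hz, hgz⟩ := mem_iUnion₂.1 hgz
            have hKsub : K g ⊆ D \ Tb y := by
              intro w hw
              refine ⟨hK1 g hgA hw, ?_⟩
              intro hwTb
              have hwS : w ∈ S := hwTb.1
              have hwR : w ∈ R z := hRK z g hgz hgA ⟨hw, hwS⟩
              have hnot := (hmspec w hwS).2 z hz.1 hwR
              rw [hwTb.2] at hnot
              exact hnot hz.2
            have hgcl : g ∈ N.closure (D \ Tb y) :=
              (N.closure_subset_closure hKsub) (hK3 g hgA)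
            exact (N.closure_subset_closure subset_union_left) hgcl
      exact (Matroid.closure_subset_closure_of_subset_closure hGsub) (hG3 x hxS)
    have hDW : D ⊆ N.closure ((D \ Tb y) ∪ Ab y) := by
      intro d hd
      by_cases hdT : d ∈ Tb y
      · exact hTbW d hdT
      · exact N.subset_closure _ hWE (Or.inl ⟨hd, hdT⟩)
    rw [← hD.closure_eq]
    exact Matroid.closure_subset_closure_of_subset_closure hDW
  -- apply Part A to each block
  have hQ : ∀ y, y ∈ S → ∃ ψ : α → α, InjOn ψ (Tb y) ∧
      ∀ t ∈ Tb y, ψ t ∈ Ab y ∧ ψ t ∉ N.closure (D \ {t}) := by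
    intro y hy
    refine partA N hD ((hTbS y).trans hS) ?_ ((hAbA y).trans hAE)
      (hAD.mono_left (hAbA y)) (hblock y hy)
    refine (hRcount y).mono ?_
    intro x hx
    rw [← hx.2]
    exact ((hmspec x hx.1).1).2
  have hPsiex : ∃ Ψ : α → α → α, ∀ y, y ∈ S → InjOn (Ψ y) (Tb y) ∧
      ∀ t ∈ Tb y, Ψ y t ∈ Ab y ∧ Ψ y t ∉ N.closure (D \ {t}) := by
    refine ⟨fun y => if h : ∃ ψ : α → α, InjOn ψ (Tb y) ∧
      ∀ t ∈ Tb y, ψ t ∈ Ab y ∧ ψ t ∉ N.closure (D \ {t}) then h.choose else id, ?_⟩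
    intro y hy
    simp only [dif_pos (hQ y hy)]
    exact (hQ y hy).choose_spec
  obtain ⟨Ψ, hΨspec⟩ := hPsiex
  have hAbdis : ∀ y y', y ∈ S → y' ∈ S → y ≠ y' → ∀ u, u ∈ Ab y → u ∈ Ab y' → False := by
    intro y y' hy hy' hne u hu hu'
    rcases trichotomous_of WellOrderingRel y y' with h | h | h
    · exact hu'.2 (mem_biUnion (show y ∈ {z | z ∈ S ∧ WellOrderingRel z y'} from ⟨hy, h⟩) hu.1.2)
    · exact hne h
    · exact hu.2 (mem_biUnion (show y' ∈ {z | z ∈ S ∧ WellOrderingRel z y} from ⟨hy', h⟩) hu'.1.2)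
  refine ⟨fun x => Ψ (m x) x, ?_, ?_⟩
  · intro s hs t ht heq0
    have heq : Ψ (m s) s = Ψ (m t) t := heq0
    have hmsS := ((hmspec s hs).1).1
    have hmtS := ((hmspec t ht).1).1
    rcases eq_or_ne (m s) (m t) with hq | hq
    · rw [← hq] at heq
      exact (hΨspec (m s) hmsS).1 (show s ∈ Tb (m s) from ⟨hs, rfl⟩)
        (show t ∈ Tb (m s) from ⟨ht, hq.symm⟩) heq
    · exfalso
      have h1 := ((hΨspec (m s) hmsS).2 s ⟨hs, rfl⟩).1
      have h2 := ((hΨspec (m t) hmtS).2 t ⟨ht, rfl⟩).1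
      rw [heq] at h1
      exact hAbdis (m s) (m t) hmsS hmtS hq _ h1 h2
  · intro x hx
    have h := (hΨspec (m x) ((hmspec x hx).1).1).2 x ⟨hx, rfl⟩
    exact ⟨hAbA (m x) h.1, h.2⟩

end PartB

end Stmt6Aux

open Stmt6Aux Set

theorem stmt_6 {α : Type*} (M : Matroid α) [M✶.Finitary]
    {J B : Set α} (hJ : M.Indep J) (hB : M.IsBase B) :
    ∃ f : J → B, Function.Injective f ∧
      ∀ x : J, M.IsBase (insert (x : α) (B \ {(f x : α)})) := by
  classical
  set N := M✶ with hN
  have hND : N.IsBase (M.E \ B) := hB.compl_isBase_dual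
  have hJE : J ⊆ M.E := hJ.subset_ground
  have hBE : B ⊆ M.E := hB.subset_ground
  have hS : (J \ B : Set α) ⊆ M.E \ B := fun x hx => ⟨hJE hx.1, hx.2⟩
  have hAE : (B \ J : Set α) ⊆ N.E := fun a ha => (hBE ha.1 : a ∈ M.E)
  have hAD : Disjoint (B \ J : Set α) (M.E \ B) := by
    rw [Set.disjoint_left]
    intro a ha haD
    exact haD.2 ha.1
  have hsetid : ((M.E \ B) \ (J \ B)) ∪ (B \ J) = M.E \ J := by
    ext u
    simp only [mem_union, mem_diff]
    constructor
    · rintro (⟨⟨h1, h2⟩, h3⟩ | ⟨h1, h2⟩)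
      · exact ⟨h1, fun hu => h3 ⟨hu, h2⟩⟩
      · exact ⟨hBE h1, h2⟩
    · rintro ⟨h1, h2⟩
      by_cases hb : u ∈ B
      · exact Or.inr ⟨hb, h2⟩
      · exact Or.inl ⟨⟨h1, hb⟩, fun hc => h2 hc.1⟩
  have hsp : N.E ⊆ N.closure (((M.E \ B) \ (J \ B)) ∪ (B \ J)) := by
    rw [hsetid]
    obtain ⟨B₂, hB₂, hJB₂⟩ := hJ.exists_isBase_superset
    have hB₂c : N.IsBase (M.E \ B₂) := hB₂.compl_isBase_dual
    have hsub : M.E \ B₂ ⊆ M.E \ J := diff_subset_diff_right hJB₂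
    have hEJ : (M.E \ J : Set α) ⊆ N.E := (diff_subset : M.E \ J ⊆ M.E)
    have hspan : N.Spanning (M.E \ J) := hB₂c.spanning.superset hsub hEJ
    rw [(Matroid.spanning_iff_closure_eq hEJ).1 hspan]
  obtain ⟨ψ, hinj, hspec⟩ := partB N hND hS hAE hAD hsp
  have hψB : ∀ x : α, x ∈ J → x ∉ B → ψ x ∈ B := fun x h1 h2 => (hspec x ⟨h1, h2⟩).1.1
  have hbase : ∀ x : α, x ∈ J \ B → M.IsBase (insert x (B \ {ψ x})) := by
    intro x hx
    obtain ⟨hψA, hψcl⟩ := hspec x hx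
    have hxE : x ∈ M.E := hJE hx.1
    have hxB : x ∉ B := hx.2
    have hxne : x ≠ ψ x := fun hc => hxB (hc ▸ hψA.1)
    have hdual : N.IsBase (insert (ψ x) ((M.E \ B) \ {x})) :=
      insert_base N hND (hS hx) (hBE hψA.1 : ψ x ∈ M.E) hψcl
    have hcompl : M.IsBase (M.E \ insert (ψ x) ((M.E \ B) \ {x})) :=
      hdual.compl_isBase_of_dual
    have hid : M.E \ insert (ψ x) ((M.E \ B) \ {x}) = insert x (B \ {ψ x}) := by
      ext u
      simp only [mem_diff, mem_insert_iff, mem_singleton_iff]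
      constructor
      · rintro ⟨huE, hu2⟩
        push_neg at hu2
        obtain ⟨hne1, hne2⟩ := hu2
        by_cases hub : u ∈ B
        · exact Or.inr ⟨hub, hne1⟩
        · exact Or.inl (hne2 ⟨huE, hub⟩)
      · rintro (rfl | ⟨huB, hne1⟩)
        · refine ⟨hxE, ?_⟩
          push_neg
          exact ⟨hxne, fun _ => rfl⟩
        · refine ⟨hBE huB, ?_⟩
          push_neg
          exact ⟨hne1, fun hc => absurd huB hc.2⟩
    rw [hid] at hcompl
    exact hcompl
  refine ⟨fun x => if hx : (x : α) ∈ B then ⟨(x : α), hx⟩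
    else ⟨ψ (x : α), hψB (x : α) x.2 hx⟩, ?_, ?_⟩
  · intro x₁ x₂ h
    have h' : (if hx : (x₁ : α) ∈ B then (⟨(x₁ : α), hx⟩ : B)
        else ⟨ψ (x₁ : α), hψB (x₁ : α) x₁.2 hx⟩) =
        (if hx : (x₂ : α) ∈ B then (⟨(x₂ : α), hx⟩ : B)
        else ⟨ψ (x₂ : α), hψB (x₂ : α) x₂.2 hx⟩) := h
    by_cases h1 : (x₁ : α) ∈ B <;> by_cases h2 : (x₂ : α) ∈ B
    · rw [dif_pos h1, dif_pos h2] at h'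
      exact Subtype.ext (Subtype.mk_eq_mk.1 h')
    · rw [dif_pos h1, dif_neg h2] at h'
      have hval : (x₁ : α) = ψ (x₂ : α) := Subtype.mk_eq_mk.1 h'
      have : ψ (x₂ : α) ∈ B \ J := (hspec (x₂ : α) ⟨x₂.2, h2⟩).1
      exact absurd (hval ▸ x₁.2) this.2
    · rw [dif_neg h1, dif_pos h2] at h'
      have hval : ψ (x₁ : α) = (x₂ : α) := Subtype.mk_eq_mk.1 h'
      have : ψ (x₁ : α) ∈ B \ J := (hspec (x₁ : α) ⟨x₁.2, h1⟩).1
      exact absurd (hval ▸ x₂.2) this.2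
    · rw [dif_neg h1, dif_neg h2] at h'
      have hval : ψ (x₁ : α) = ψ (x₂ : α) := Subtype.mk_eq_mk.1 h'
      exact Subtype.ext (hinj ⟨x₁.2, h1⟩ ⟨x₂.2, h2⟩ hval)
  · intro x
    by_cases hx : (x : α) ∈ B
    · have hid2 : insert ((x : α)) (B \ {(x : α)}) = B := by
        rw [insert_diff_singleton, insert_eq_self.2 hx]
      simp only [dif_pos hx]
      rw [hid2]
      exact hB
    · simp only [dif_neg hx]
      exact hbase (x : α) ⟨x.2, hx⟩
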